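/- Let M = A − BΨA with spectral norm ‖M‖ < 1, and let Q, T be positive definite symmetric matrices with Mᵀ Q M − Q = −T (discrete Lyapunov equation). Define Θ = (1/μ_min(T))·(‖Mᵀ Q‖ + (‖Mᵀ Q‖² + μ_min(T)‖Q‖)^{1/2}). Then for any vectors x and d with x(+) = M x + d, if ‖x‖ > Θ‖d‖ then xᵀ(+) Q x(+) − xᵀ Q x < 0, i.e., the Lyapunov function V(x) = xᵀ Q x strictly decreases whenever the state norm exceeds Θ times the disturbance norm. -/

import Mathlib

open Matrix
open scoped Matrix.Norms.L2Operator

lemma dot_eq_inner {K : ℕ} (v w : EuclideanSpace ℝ (Fin K)) :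
    ⇑v ⬝ᵥ ⇑w = inner ℝ v w := by
  simp [dotProduct, PiLp.inner_apply, RCLike.inner_apply, mul_comm]

lemma min_eig_le_quad {K : ℕ} [NeZero K] (T : Matrix (Fin K) (Fin K) ℝ)
    (hT : T.PosDef) (v : EuclideanSpace ℝ (Fin K)) :
    (⨅ i, hT.isHermitian.eigenvalues i) * ‖v‖ ^ 2 ≤ ⇑v ⬝ᵥ (T *ᵥ ⇑v) := by
  set μ := ⨅ i, hT.isHermitian.eigenvalues i with hμ
  have hbdd : BddBelow (Set.range hT.isHermitian.eigenvalues) := Set.Finite.bddBelow (Set.finite_range _)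
  have hps : (T - μ • 1).PosSemidef := by
    have hU : (hT.isHermitian.eigenvectorUnitary : Matrix (Fin K) (Fin K) ℝ) *
        star (hT.isHermitian.eigenvectorUnitary : Matrix (Fin K) (Fin K) ℝ) = 1 :=
      (Matrix.mem_unitaryGroup_iff).mp hT.isHermitian.eigenvectorUnitary.2
    have key : T - μ • 1 =
        (hT.isHermitian.eigenvectorUnitary : Matrix (Fin K) (Fin K) ℝ) *
          diagonal (fun i => hT.isHermitian.eigenvalues i - μ) *
          (hT.isHermitian.eigenvectorUnitary : Matrix (Fin K) (Fin K) ℝ)ᴴ := by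
      conv_lhs => rw [hT.isHermitian.spectral_theorem, Unitary.conjStarAlgAut_apply]
      have : (μ • 1 : Matrix (Fin K) (Fin K) ℝ) =
          (hT.isHermitian.eigenvectorUnitary : Matrix (Fin K) (Fin K) ℝ) * (μ • 1) *
          star (hT.isHermitian.eigenvectorUnitary : Matrix (Fin K) (Fin K) ℝ) := by
        rw [mul_smul_comm, smul_mul_assoc, mul_one, hU]
      rw [this, ← sub_mul, ← mul_sub, Matrix.smul_one_eq_diagonal, ← diagonal_sub]
      rfl
    rw [key]
    refine PosSemidef.mul_mul_conjTranspose_same ?_ _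
    refine posSemidef_diagonal_iff.mpr fun i => sub_nonneg.mpr (ciInf_le hbdd i)
  have h0 := hps.dotProduct_mulVec_nonneg ⇑v
  simp only [star_trivial, sub_mulVec, dotProduct_sub, smul_mulVec, one_mulVec,
    dotProduct_smul, sub_nonneg] at h0
  calc μ * ‖v‖ ^ 2 = μ • (⇑v ⬝ᵥ ⇑v) := by
        rw [dot_eq_inner, real_inner_self_eq_norm_sq]; simp
    _ ≤ ⇑v ⬝ᵥ (T *ᵥ ⇑v) := h0

theorem lyapunov_drift_negative {K : ℕ} [NeZero K]
    (M Q T : Matrix (Fin K) (Fin K) ℝ)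
    (hM : ‖M‖ < 1) (hQ : Q.PosDef) (hT : T.PosDef)
    (hLyap : Mᵀ * Q * M - Q = -T)
    (Θ : ℝ)
    (hΘ : Θ = (1 / ⨅ i, hT.isHermitian.eigenvalues i) *
      (‖Mᵀ * Q‖ +
        Real.sqrt (‖Mᵀ * Q‖ ^ 2 + (⨅ i, hT.isHermitian.eigenvalues i) * ‖Q‖)))
    (x d : EuclideanSpace ℝ (Fin K))
    (hx : Θ * ‖d‖ < ‖x‖) :
    (M *ᵥ ⇑x + ⇑d) ⬝ᵥ (Q *ᵥ (M *ᵥ ⇑x + ⇑d)) - ⇑x ⬝ᵥ (Q *ᵥ ⇑x) < 0 := by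
  have hTbound : (⨅ i, hT.isHermitian.eigenvalues i) * ‖x‖ ^ 2 ≤ ⇑x ⬝ᵥ (T *ᵥ ⇑x) :=
    min_eig_le_quad T hT x
  set μ := ⨅ i, hT.isHermitian.eigenvalues i with hμ
  have hμpos : 0 < μ := by
    obtain ⟨i, hi⟩ := exists_eq_ciInf_of_finite (f := hT.isHermitian.eigenvalues)
    rw [hμ, ← hi]; exact hT.eigenvalues_pos i
  clear_value μ
  clear hμ
  set a := ‖Mᵀ * Q‖ with ha
  set q := ‖Q‖ with hq
  have hq0 : 0 ≤ q := norm_nonneg _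
  have ha0 : 0 ≤ a := norm_nonneg _
  set c := Real.sqrt (a ^ 2 + μ * q) with hc
  have hc0 : 0 ≤ c := Real.sqrt_nonneg _
  have hc2 : c ^ 2 = a ^ 2 + μ * q := Real.sq_sqrt (by positivity)
  clear_value c
  clear hc
  have hQsymm : Qᵀ = Q := hQ.isHermitian
  have key : ∀ (A : Matrix (Fin K) (Fin K) ℝ) (u w : Fin K → ℝ),
      (A *ᵥ u) ⬝ᵥ w = u ⬝ᵥ (Aᵀ *ᵥ w) := by
    intro A u w
    rw [dotProduct_mulVec, vecMul_transpose]
  have expand : (M *ᵥ ⇑x + ⇑d) ⬝ᵥ (Q *ᵥ (M *ᵥ ⇑x + ⇑d)) - ⇑x ⬝ᵥ (Q *ᵥ ⇑x)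
      = -(⇑x ⬝ᵥ (T *ᵥ ⇑x)) + 2 * (⇑x ⬝ᵥ ((Mᵀ * Q) *ᵥ ⇑d)) + ⇑d ⬝ᵥ (Q *ᵥ ⇑d) := by
    have h1 : (M *ᵥ ⇑x) ⬝ᵥ (Q *ᵥ (M *ᵥ ⇑x)) = ⇑x ⬝ᵥ ((Mᵀ * Q * M) *ᵥ ⇑x) := by
      rw [mulVec_mulVec, key, mulVec_mulVec, ← mul_assoc]
    have h2 : (M *ᵥ ⇑x) ⬝ᵥ (Q *ᵥ ⇑d) = ⇑x ⬝ᵥ ((Mᵀ * Q) *ᵥ ⇑d) := by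
      rw [key, mulVec_mulVec]
    have h3 : ⇑d ⬝ᵥ (Q *ᵥ (M *ᵥ ⇑x)) = ⇑x ⬝ᵥ ((Mᵀ * Q) *ᵥ ⇑d) := by
      rw [dotProduct_comm, mulVec_mulVec, key, transpose_mul, hQsymm]
    have h4 : ⇑x ⬝ᵥ ((Mᵀ * Q * M) *ᵥ ⇑x) - ⇑x ⬝ᵥ (Q *ᵥ ⇑x) = -(⇑x ⬝ᵥ (T *ᵥ ⇑x)) := by
      rw [← dotProduct_sub, ← sub_mulVec, hLyap, neg_mulVec, dotProduct_neg]
    rw [mulVec_add, add_dotProduct, dotProduct_add, dotProduct_add, h1, h2, h3]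
    linarith [h4]
  rw [expand]
  have hcross : ⇑x ⬝ᵥ ((Mᵀ * Q) *ᵥ ⇑d) ≤ a * ‖x‖ * ‖d‖ := by
    calc ⇑x ⬝ᵥ ((Mᵀ * Q) *ᵥ ⇑d)
        = inner ℝ x ((EuclideanSpace.equiv (Fin K) ℝ).symm ((Mᵀ * Q) *ᵥ ⇑d)) := dot_eq_inner x ((EuclideanSpace.equiv (Fin K) ℝ).symm ((Mᵀ * Q) *ᵥ ⇑d))
      _ ≤ ‖x‖ * ‖(EuclideanSpace.equiv (Fin K) ℝ).symm ((Mᵀ * Q) *ᵥ ⇑d)‖ :=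
          real_inner_le_norm _ _
      _ ≤ ‖x‖ * (a * ‖d‖) := by
          gcongr
          exact (Mᵀ * Q).l2_opNorm_mulVec d
      _ = a * ‖x‖ * ‖d‖ := by ring
  have hdQd : ⇑d ⬝ᵥ (Q *ᵥ ⇑d) ≤ q * ‖d‖ ^ 2 := by
    calc ⇑d ⬝ᵥ (Q *ᵥ ⇑d)
        = inner ℝ d ((EuclideanSpace.equiv (Fin K) ℝ).symm (Q *ᵥ ⇑d)) := dot_eq_inner d ((EuclideanSpace.equiv (Fin K) ℝ).symm (Q *ᵥ ⇑d))
      _ ≤ ‖d‖ * ‖(EuclideanSpace.equiv (Fin K) ℝ).symm (Q *ᵥ ⇑d)‖ := real_inner_le_norm _ _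
      _ ≤ ‖d‖ * (q * ‖d‖) := by
          gcongr
          exact Q.l2_opNorm_mulVec d
      _ = q * ‖d‖ ^ 2 := by ring
  have hxd : (a + c) * ‖d‖ < μ * ‖x‖ := by
    have h : 1 / μ * (a + c) * ‖d‖ < ‖x‖ := by rw [hΘ] at hx; exact hx
    have h2 := (mul_lt_mul_iff_right₀ hμpos).mpr h
    have h3 : μ * (1 / μ * (a + c) * ‖d‖) = (a + c) * ‖d‖ := by
      field_simp
    linarith
  have hd0 : 0 ≤ ‖d‖ := norm_nonneg d
  have keyq : 0 < (μ * ‖x‖ - (a + c) * ‖d‖) * (μ * ‖x‖ - (a - c) * ‖d‖) := by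
    have h2 : 0 < μ * ‖x‖ - (a + c) * ‖d‖ := by linarith
    have h3 : 0 < μ * ‖x‖ - (a - c) * ‖d‖ := by nlinarith
    positivity
  nlinarith [keyq, hTbound, hcross, hdQd, sq_nonneg ‖d‖, hμpos]
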